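/- Assume: (1) P ∈ ℝ^{m×(L+1)p} satisfies P · I_L = [I_m, 0]; define Ã := A − B P O_L and C̃ := −P O_L; (2) the pair (A, C) is observable, i.e., the only ξ ∈ ℝⁿ with C A^k ξ = 0 for all k = 0,…,n−1 is ξ = 0; (3) N ≥ n; (4) X̃ ∈ ℝ^{n×s} is a matrix whose column space equals the output-nulling subspace V₀. Let Õ_{N−1} ∈ ℝ^{Nm×n} be the matrix with block rows C̃ Ã^k for k = 0,…,N−1, let G be a Moore–Penrose pseudoinverse of Õ_{N−1} X̃, define M_u := C̃ Ã^N X̃ G ∈ ℝ^{m×Nm}, and let R ∈ ℝ^{Nm×Nm} be the block companion matrix whose (i, i+1) blocks equal I_m for i = 1,…,N−1, whose last block row equals M_u, and whose remaining blocks are zero. Then all complex eigenvalues of R have modulus strictly less than 1 if and only if every invariant zero z ∈ ℂ of the system (A,B,C,D) satisfies |z| < 1. -/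

import Mathlib

open Matrix

/-- Block observability matrix `O_L` with block rows `C A^k`, `k = 0,…,L`. -/
noncomputable def obsMat {n p : ℕ} (A : Matrix (Fin n) (Fin n) ℝ)
    (C : Matrix (Fin p) (Fin n) ℝ) (L : ℕ) :
    Matrix (Fin (L + 1) × Fin p) (Fin n) ℝ :=
  fun kr j => (C * A ^ (kr.1 : ℕ)) kr.2 j

/-- Block invertibility (Toeplitz) matrix `I_L` of the LTI system `(A,B,C,D)`. -/
noncomputable def invMat {n m p : ℕ} (A : Matrix (Fin n) (Fin n) ℝ)
    (B : Matrix (Fin n) (Fin m) ℝ) (C : Matrix (Fin p) (Fin n) ℝ)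
    (D : Matrix (Fin p) (Fin m) ℝ) (L : ℕ) :
    Matrix (Fin (L + 1) × Fin p) (Fin (L + 1) × Fin m) ℝ :=
  fun jr ic =>
    if (jr.1 : ℕ) = (ic.1 : ℕ) then D jr.2 ic.2
    else if (ic.1 : ℕ) < (jr.1 : ℕ) then
      (C * A ^ ((jr.1 : ℕ) - (ic.1 : ℕ) - 1) * B) jr.2 ic.2
    else 0

/-- The block matrix `[I_m, 0] ∈ ℝ^{m × (L+1)m}`. -/
noncomputable def idZero (m L : ℕ) : Matrix (Fin m) (Fin (L + 1) × Fin m) ℝ :=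
  fun r ic => if (ic.1 : ℕ) = 0 ∧ r = ic.2 then 1 else 0

/-- The state sequence of `x_{k+1} = A x_k + B u_k` from initial state `ξ`. -/
noncomputable def stateSeq {n m : ℕ} (A : Matrix (Fin n) (Fin n) ℝ)
    (B : Matrix (Fin n) (Fin m) ℝ) (ξ : Fin n → ℝ) (u : ℕ → Fin m → ℝ) :
    ℕ → Fin n → ℝ
  | 0 => ξ
  | k + 1 => A.mulVec (stateSeq A B ξ u k) + B.mulVec (u k)

/-- The output-nulling subspace `V₀`: states from which some input sequence keeps the
output `y_k = C x_k + D u_k` identically zero. -/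
def outputNulling {n m p : ℕ} (A : Matrix (Fin n) (Fin n) ℝ)
    (B : Matrix (Fin n) (Fin m) ℝ) (C : Matrix (Fin p) (Fin n) ℝ)
    (D : Matrix (Fin p) (Fin m) ℝ) : Set (Fin n → ℝ) :=
  {ξ | ∃ u : ℕ → Fin m → ℝ, ∀ k, C.mulVec (stateSeq A B ξ u k) + D.mulVec (u k) = 0}

/-- The Rosenbrock matrix `[A - zI, B; C, D] ∈ ℂ^{(n+p) × (n+m)}`. -/
noncomputable def rosenbrock {n m p : ℕ} (A : Matrix (Fin n) (Fin n) ℝ)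
    (B : Matrix (Fin n) (Fin m) ℝ) (C : Matrix (Fin p) (Fin n) ℝ)
    (D : Matrix (Fin p) (Fin m) ℝ) (z : ℂ) :
    Matrix (Fin n ⊕ Fin p) (Fin n ⊕ Fin m) ℂ :=
  Matrix.fromBlocks (A.map Complex.ofReal - z • 1) (B.map Complex.ofReal)
    (C.map Complex.ofReal) (D.map Complex.ofReal)

/-- Block observability-type matrix with block rows `C̃ Ã^k`, `k = 0,…,N-1`. -/
noncomputable def tildeObs {n m : ℕ} (Atil : Matrix (Fin n) (Fin n) ℝ)
    (Ctil : Matrix (Fin m) (Fin n) ℝ) (N : ℕ) :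
    Matrix (Fin N × Fin m) (Fin n) ℝ :=
  fun kr j => (Ctil * Atil ^ (kr.1 : ℕ)) kr.2 j

/-- Block companion matrix: identity blocks on the superdiagonal, last block row `M_u`. -/
noncomputable def blockCompanion {N m : ℕ} (Mu : Matrix (Fin m) (Fin N × Fin m) ℝ) :
    Matrix (Fin N × Fin m) (Fin N × Fin m) ℝ :=
  fun ir jc =>
    if (ir.1 : ℕ) + 1 = N then Mu ir.2 jc
    else if (jc.1 : ℕ) = (ir.1 : ℕ) + 1 ∧ ir.2 = jc.2 then 1 else 0

/-- `G` is a Moore–Penrose pseudoinverse of `K`. -/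
def IsMoorePenrose {a b : Type*} [Fintype a] [Fintype b] (K : Matrix a b ℝ)
    (G : Matrix b a ℝ) : Prop :=
  K * G * K = K ∧ G * K * G = G ∧ (K * G)ᵀ = K * G ∧ (G * K)ᵀ = G * K


set_option linter.unusedSectionVars false
set_option maxHeartbeats 1000000

lemma mulVec_sum' {α : Type*} [CommRing α] {a b : Type*} [Fintype a] [Fintype b]
    (M : Matrix a b α) {ι : Type*} (t : Finset ι) (f : ι → b → α) :
    M.mulVec (∑ i ∈ t, f i) = ∑ i ∈ t, M.mulVec (f i) := by
  ext x
  simp only [Matrix.mulVec, dotProduct, Finset.sum_apply, Finset.mul_sum]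
  exact Finset.sum_comm

section
variable {n m p L : ℕ} (A : Matrix (Fin n) (Fin n) ℝ) (B : Matrix (Fin n) (Fin m) ℝ)
  (C : Matrix (Fin p) (Fin n) ℝ) (D : Matrix (Fin p) (Fin m) ℝ)

lemma stateSeq_eq (ξ : Fin n → ℝ) (u : ℕ → Fin m → ℝ) (k : ℕ) :
    stateSeq A B ξ u k
      = (A ^ k).mulVec ξ + ∑ i ∈ Finset.range k, (A ^ (k - 1 - i) * B).mulVec (u i) := by
  induction k with
  | zero => simp [stateSeq]
  | succ k ih =>
      rw [stateSeq, ih]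
      rw [Matrix.mulVec_add, Finset.sum_range_succ]
      have h1 : A.mulVec ((A ^ k).mulVec ξ) = (A ^ (k+1)).mulVec ξ := by
        rw [Matrix.mulVec_mulVec, ← pow_succ']
      have h2 : A.mulVec (∑ i ∈ Finset.range k, (A ^ (k - 1 - i) * B).mulVec (u i))
          = ∑ i ∈ Finset.range k, (A ^ (k + 1 - 1 - i) * B).mulVec (u i) := by
        rw [mulVec_sum']
        refine Finset.sum_congr rfl fun i hi => ?_
        have hik : i < k := Finset.mem_range.mp hi
        have he : k + 1 - 1 - i = (k - 1 - i) + 1 := by omega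
        rw [Matrix.mulVec_mulVec, ← Matrix.mul_assoc, ← pow_succ', he]
      rw [h1, h2]
      have h3 : (A ^ (k + 1 - 1 - k) * B).mulVec (u k) = B.mulVec (u k) := by
        simp
      rw [h3, add_assoc]

lemma output_eq (ξ : Fin n → ℝ) (u : ℕ → Fin m → ℝ) (j : ℕ) :
    C.mulVec (stateSeq A B ξ u j) + D.mulVec (u j)
      = (C * A ^ j).mulVec ξ
        + (∑ i ∈ Finset.range j, (C * (A ^ (j - 1 - i) * B)).mulVec (u i)
        + D.mulVec (u j)) := by
  rw [stateSeq_eq, Matrix.mulVec_add, mulVec_sum']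
  simp only [Matrix.mulVec_mulVec]
  rw [add_assoc]

end

section
variable {n m p L : ℕ} (A : Matrix (Fin n) (Fin n) ℝ) (B : Matrix (Fin n) (Fin m) ℝ)
  (C : Matrix (Fin p) (Fin n) ℝ) (D : Matrix (Fin p) (Fin m) ℝ)

lemma invMat_mulVec (u : ℕ → Fin m → ℝ) (jr : Fin (L+1) × Fin p) :
    (invMat A B C D L).mulVec (fun ic => u (ic.1 : ℕ) ic.2) jr
      = (∑ i ∈ Finset.range (jr.1 : ℕ),
          ((C * (A ^ ((jr.1 : ℕ) - 1 - i) * B)).mulVec (u i)) jr.2)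
        + (D.mulVec (u (jr.1 : ℕ))) jr.2 := by
  obtain ⟨j, r⟩ := jr
  simp only [Matrix.mulVec, dotProduct]
  rw [Fintype.sum_prod_type]
  have hstep : ∀ i : Fin (L+1),
      (∑ c : Fin m, invMat A B C D L (j, r) (i, c) * u (i : ℕ) c)
        = (if (j:ℕ) = (i:ℕ) then (D.mulVec (u (i:ℕ))) r else 0)
          + (if (i:ℕ) < (j:ℕ) then ((C * (A ^ ((j:ℕ) - 1 - (i:ℕ)) * B)).mulVec (u (i:ℕ))) r else 0) := by
    intro i
    by_cases h1 : (j:ℕ) = (i:ℕ)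
    · simp only [invMat, h1, if_pos rfl]
      have : ¬ ((i:ℕ) < (i:ℕ)) := lt_irrefl _
      simp [Matrix.mulVec, dotProduct, h1]
    · by_cases h2 : (i:ℕ) < (j:ℕ)
      · simp only [invMat, if_neg h1, if_pos h2]
        have he : (j:ℕ) - (i:ℕ) - 1 = (j:ℕ) - 1 - (i:ℕ) := by omega
        simp [Matrix.mulVec, dotProduct, he, h1, h2, Matrix.mul_assoc, Finset.sum_mul]
      · simp [invMat, h1, h2]
  rw [Finset.sum_congr rfl (fun i _ => hstep i)]
  rw [Finset.sum_add_distrib]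
  have e1 : (∑ i : Fin (L+1), if (j:ℕ) = (i:ℕ) then (D.mulVec (u (i:ℕ))) r else 0)
      = (D.mulVec (u (j:ℕ))) r := by
    rw [Fin.sum_univ_eq_sum_range (fun k => if (j:ℕ) = k then (D.mulVec (u k)) r else 0)]
    rw [Finset.sum_ite_eq (Finset.range (L+1)) (j:ℕ) (fun k => (D.mulVec (u k)) r)]
    simp [j.isLt]
  have e2 : (∑ i : Fin (L+1), if (i:ℕ) < (j:ℕ) then ((C * (A ^ ((j:ℕ) - 1 - (i:ℕ)) * B)).mulVec (u (i:ℕ))) r else 0)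
      = ∑ i ∈ Finset.range (j:ℕ), ((C * (A ^ ((j:ℕ) - 1 - i) * B)).mulVec (u i)) r := by
    rw [Fin.sum_univ_eq_sum_range (fun k => if k < (j:ℕ) then ((C * (A ^ ((j:ℕ) - 1 - k) * B)).mulVec (u k)) r else 0)]
    rw [← Finset.sum_filter]
    congr 1
    ext k
    simp only [Finset.mem_filter, Finset.mem_range]
    constructor
    · rintro ⟨_, h⟩; exact h
    · intro h; exact ⟨by omega, h⟩
  rw [e1, e2, add_comm]
  rfl

lemma obsMat_mulVec (ξ : Fin n → ℝ) (jr : Fin (L+1) × Fin p) :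
    (obsMat A C L).mulVec ξ jr = ((C * A ^ (jr.1 : ℕ)).mulVec ξ) jr.2 := rfl

lemma idZero_mulVec (u : ℕ → Fin m → ℝ) (r : Fin m) :
    (idZero m L).mulVec (fun ic => u (ic.1 : ℕ) ic.2) r = u 0 r := by
  simp only [Matrix.mulVec, dotProduct, idZero]
  rw [Fintype.sum_prod_type]
  have hstep : ∀ i : Fin (L+1),
      (∑ c : Fin m, (if (i:ℕ) = 0 ∧ r = c then (1:ℝ) else 0) * u (i:ℕ) c)
        = if (i:ℕ) = 0 then u (i:ℕ) r else 0 := by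
    intro i
    by_cases h : (i:ℕ) = 0
    · simp [h]
    · simp [h]
  rw [Finset.sum_congr rfl (fun i _ => hstep i)]
  rw [Fin.sum_univ_eq_sum_range (fun k => if k = 0 then u k r else 0)]
  rw [Finset.sum_ite_eq' (Finset.range (L+1)) 0 (fun k => u k r)]
  simp

end

section
variable {n m p L : ℕ} (A : Matrix (Fin n) (Fin n) ℝ) (B : Matrix (Fin n) (Fin m) ℝ)
  (C : Matrix (Fin p) (Fin n) ℝ) (D : Matrix (Fin p) (Fin m) ℝ)
  (P : Matrix (Fin m) (Fin (L + 1) × Fin p) ℝ)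

/-- Key input-reconstruction: the first input of any output-nulling trajectory is `C̃ ξ`. -/
lemma u0_eq (hP : P * invMat A B C D L = idZero m L) (ξ : Fin n → ℝ) (u : ℕ → Fin m → ℝ)
    (hy : ∀ k, C.mulVec (stateSeq A B ξ u k) + D.mulVec (u k) = 0) :
    u 0 = (-(P * obsMat A C L)).mulVec ξ := by
  have hstack : (obsMat A C L).mulVec ξ
      + (invMat A B C D L).mulVec (fun ic => u (ic.1 : ℕ) ic.2) = 0 := by
    funext jr
    have h := congrFun (hy (jr.1 : ℕ)) jr.2
    rw [output_eq] at h
    simp only [Pi.add_apply, Pi.zero_apply] at h ⊢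
    rw [obsMat_mulVec, invMat_mulVec]
    simpa using h
  have h2 : (invMat A B C D L).mulVec (fun ic => u (ic.1 : ℕ) ic.2)
      = -((obsMat A C L).mulVec ξ) := by
    exact eq_neg_of_add_eq_zero_right hstack
  have h3 := congrArg (fun v => P.mulVec v) h2
  simp only [Matrix.mulVec_neg] at h3
  rw [Matrix.mulVec_mulVec, Matrix.mulVec_mulVec, hP] at h3
  funext r
  have h4 := congrFun h3 r
  rw [idZero_mulVec] at h4
  rw [h4]
  simp [Matrix.neg_mulVec]

/-- shifted state sequence -/
lemma stateSeq_shift (ξ : Fin n → ℝ) (u : ℕ → Fin m → ℝ) (k : ℕ) :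
    stateSeq A B (stateSeq A B ξ u 1) (fun j => u (j+1)) k = stateSeq A B ξ u (k+1) := by
  induction k with
  | zero => rfl
  | succ k ih => rw [stateSeq, ih]; rfl

lemma mem_step (hP : P * invMat A B C D L = idZero m L) (ξ : Fin n → ℝ)
    (hξ : ξ ∈ outputNulling A B C D) :
    C.mulVec ξ + D.mulVec ((-(P * obsMat A C L)).mulVec ξ) = 0
      ∧ (A - B * P * obsMat A C L).mulVec ξ ∈ outputNulling A B C D := by
  obtain ⟨u, hy⟩ := hξ
  have h0 : u 0 = (-(P * obsMat A C L)).mulVec ξ := u0_eq A B C D P hP ξ u hy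
  constructor
  · have := hy 0
    rw [show stateSeq A B ξ u 0 = ξ from rfl] at this
    rw [← h0]; exact this
  · refine ⟨fun j => u (j+1), fun k => ?_⟩
    have hx1 : stateSeq A B ξ u 1 = (A - B * P * obsMat A C L).mulVec ξ := by
      rw [show stateSeq A B ξ u 1 = A.mulVec ξ + B.mulVec (u 0) from rfl, h0]
      show A.mulVec ξ + B.mulVec ((-(P * obsMat A C L)).mulVec ξ) = _
      rw [Matrix.mulVec_mulVec, Matrix.mul_neg, ← Matrix.mul_assoc, Matrix.neg_mulVec,
        Matrix.sub_mulVec, sub_eq_add_neg]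
    rw [← hx1, stateSeq_shift]
    exact hy (k+1)

lemma mem_pow (hP : P * invMat A B C D L = idZero m L) (ξ : Fin n → ℝ)
    (hξ : ξ ∈ outputNulling A B C D) (k : ℕ) :
    ((A - B * P * obsMat A C L) ^ k).mulVec ξ ∈ outputNulling A B C D := by
  induction k with
  | zero => simpa using hξ
  | succ k ih =>
      have := (mem_step A B C D P hP _ ih).2
      rw [Matrix.mulVec_mulVec, ← pow_succ'] at this
      exact this

end

section
variable {n m p L N s : ℕ} (A : Matrix (Fin n) (Fin n) ℝ) (B : Matrix (Fin n) (Fin m) ℝ)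
  (C : Matrix (Fin p) (Fin n) ℝ) (D : Matrix (Fin p) (Fin m) ℝ)
  (P : Matrix (Fin m) (Fin (L + 1) × Fin p) ℝ)

lemma Atil_mulVec (v : Fin n → ℝ) :
    (A - B * P * obsMat A C L).mulVec v
      = A.mulVec v + B.mulVec ((-(P * obsMat A C L)).mulVec v) := by
  rw [Matrix.mulVec_mulVec, Matrix.mul_neg, ← Matrix.mul_assoc, Matrix.neg_mulVec,
    Matrix.sub_mulVec, sub_eq_add_neg]

lemma V0_obs_zero (hP : P * invMat A B C D L = idZero m L)
    (hobs : ∀ ξ : Fin n → ℝ, (∀ k < n, (C * A ^ k).mulVec ξ = 0) → ξ = 0)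
    (hN : n ≤ N) (ξ : Fin n → ℝ) (hξ : ξ ∈ outputNulling A B C D)
    (h0 : ∀ k < N, (-(P * obsMat A C L)).mulVec
        (((A - B * P * obsMat A C L) ^ k).mulVec ξ) = 0) :
    ξ = 0 := by
  have hsame : ∀ k, k ≤ N → ((A - B * P * obsMat A C L) ^ k).mulVec ξ = (A ^ k).mulVec ξ := by
    intro k hk
    induction k with
    | zero => simp
    | succ k ih =>
        have hk' : k ≤ N := by omega
        have hkN : k < N := by omega
        rw [pow_succ', ← Matrix.mulVec_mulVec, Atil_mulVec, h0 k hkN,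
          Matrix.mulVec_zero, add_zero, ih hk', Matrix.mulVec_mulVec, ← pow_succ']
  apply hobs
  intro k hk
  have hkN : k < N := by omega
  have hmem := mem_pow A B C D P hP ξ hξ k
  have hout := (mem_step A B C D P hP _ hmem).1
  rw [h0 k hkN, Matrix.mulVec_zero, add_zero] at hout
  rw [← Matrix.mulVec_mulVec, ← hsame k (le_of_lt hkN)]
  exact hout

lemma Bu_Du_zero (hP : P * invMat A B C D L = idZero m L) (u0 : Fin m → ℝ)
    (hB : B.mulVec u0 = 0) (hD : D.mulVec u0 = 0) : u0 = 0 := by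
  set u : ℕ → Fin m → ℝ := fun k => if k = 0 then u0 else 0 with hu
  have hst : ∀ k, stateSeq A B 0 u k = 0 := by
    intro k
    induction k with
    | zero => rfl
    | succ k ih =>
        rw [stateSeq, ih, Matrix.mulVec_zero, zero_add]
        rcases Nat.eq_zero_or_pos k with h | h
        · subst h; simpa [hu] using hB
        · have : u k = 0 := by simp [hu, Nat.pos_iff_ne_zero.mp h]
          rw [this, Matrix.mulVec_zero]
  have hy : ∀ k, C.mulVec (stateSeq A B 0 u k) + D.mulVec (u k) = 0 := by
    intro k
    rw [hst, Matrix.mulVec_zero, zero_add]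
    rcases Nat.eq_zero_or_pos k with h | h
    · subst h; simpa [hu] using hD
    · have : u k = 0 := by simp [hu, Nat.pos_iff_ne_zero.mp h]
      rw [this, Matrix.mulVec_zero]
  have := u0_eq A B C D P hP 0 u hy
  simpa [hu, Matrix.mulVec_zero] using this

variable (Xt : Matrix (Fin n) (Fin s) ℝ)

lemma col_mem (hXt : ∀ ξ : Fin n → ℝ,
      ξ ∈ outputNulling A B C D ↔ ∃ w : Fin s → ℝ, Xt.mulVec w = ξ)
    (w : Fin s → ℝ) : Xt.mulVec w ∈ outputNulling A B C D := (hXt _).2 ⟨w, rfl⟩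

lemma exists_F (hP : P * invMat A B C D L = idZero m L)
    (hXt : ∀ ξ : Fin n → ℝ,
      ξ ∈ outputNulling A B C D ↔ ∃ w : Fin s → ℝ, Xt.mulVec w = ξ) :
    ∃ F : Matrix (Fin s) (Fin s) ℝ, Xt * F = (A - B * P * obsMat A C L) * Xt := by
  have hcol : ∀ j : Fin s, ∃ w : Fin s → ℝ,
      Xt.mulVec w = (A - B * P * obsMat A C L).mulVec (fun i => Xt i j) := by
    intro j
    apply (hXt _).1
    have : (fun i => Xt i j) = Xt.mulVec (fun k => if k = j then 1 else 0) := by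
      funext i
      simp [Matrix.mulVec, dotProduct, mul_ite]
    rw [this]
    exact (mem_step A B C D P hP _ (col_mem A B C D Xt hXt _)).2
  choose F hF using hcol
  refine ⟨Matrix.of fun i j => F j i, ?_⟩
  ext i j
  have := congrFun (hF j) i
  simp only [Matrix.mulVec, dotProduct] at this
  simp only [Matrix.mul_apply, Matrix.of_apply]
  exact this

lemma K_ker (hP : P * invMat A B C D L = idZero m L)
    (hobs : ∀ ξ : Fin n → ℝ, (∀ k < n, (C * A ^ k).mulVec ξ = 0) → ξ = 0)
    (hN : n ≤ N)
    (hXt : ∀ ξ : Fin n → ℝ,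
      ξ ∈ outputNulling A B C D ↔ ∃ w : Fin s → ℝ, Xt.mulVec w = ξ)
    (w : Fin s → ℝ)
    (hw : (tildeObs (A - B * P * obsMat A C L) (-(P * obsMat A C L)) N * Xt).mulVec w = 0) :
    Xt.mulVec w = 0 := by
  apply V0_obs_zero A B C D P hP hobs hN _ (col_mem A B C D Xt hXt w)
  intro k hk
  funext r
  have h := congrFun hw (⟨k, hk⟩, r)
  rw [Matrix.mulVec_mulVec, Matrix.mulVec_mulVec]
  exact h

end

section
variable {n m N s : ℕ}
  (At : Matrix (Fin n) (Fin n) ℝ) (Ct : Matrix (Fin m) (Fin n) ℝ)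
  (Xt : Matrix (Fin n) (Fin s) ℝ) (G : Matrix (Fin s) (Fin N × Fin m) ℝ)
  (F : Matrix (Fin s) (Fin s) ℝ)

lemma colMulVec {a b c : Type*} [Fintype b] (X : Matrix a b ℝ) (M : Matrix b c ℝ)
    (i : a) (j : c) : (X * M) i j = X.mulVec (fun k => M k j) i := by
  simp [Matrix.mul_apply, Matrix.mulVec, dotProduct]

lemma K_apply (ic : Fin N × Fin m) (j : Fin s) :
    (tildeObs At Ct N * Xt) ic j = ((Ct * At ^ (ic.1 : ℕ)) * Xt) ic.2 j := by
  simp [Matrix.mul_apply, tildeObs]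

/-- `Xt * (G*K) = Xt` given `K G K = K` and `ker K ⊆ ker Xt`. -/
lemma XtGK (hKGK : (tildeObs At Ct N * Xt) * G * (tildeObs At Ct N * Xt)
      = tildeObs At Ct N * Xt)
    (hker : ∀ w : Fin s → ℝ, (tildeObs At Ct N * Xt).mulVec w = 0 → Xt.mulVec w = 0) :
    Xt * (G * (tildeObs At Ct N * Xt)) = Xt := by
  set K := tildeObs At Ct N * Xt with hK
  set M1 : Matrix (Fin s) (Fin s) ℝ := G * K - 1 with hM1
  have hKM : K * M1 = 0 := by
    rw [hM1, Matrix.mul_sub, Matrix.mul_one, ← Matrix.mul_assoc, hKGK, sub_self]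
  have hXM : Xt * M1 = 0 := by
    ext i j
    have hcol : K.mulVec (fun k => M1 k j) = 0 := by
      funext i'
      rw [← colMulVec, hKM]
      simp
    rw [colMulVec, hker _ hcol]
    simp
  have h2 := hXM
  rw [hM1, Matrix.mul_sub, Matrix.mul_one, sub_eq_zero] at h2
  exact h2

lemma MuK (hXtGK : Xt * (G * (tildeObs At Ct N * Xt)) = Xt) :
    (Ct * At ^ N * Xt * G) * (tildeObs At Ct N * Xt) = Ct * At ^ N * Xt := by
  rw [Matrix.mul_assoc (Ct * At ^ N * Xt) G, Matrix.mul_assoc (Ct * At ^ N) Xt, hXtGK]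

/-- `R K = K F` -/
lemma RK (hF : Xt * F = At * Xt)
    (hMuK : (Ct * At ^ N * Xt * G) * (tildeObs At Ct N * Xt) = Ct * At ^ N * Xt) :
    blockCompanion (Ct * At ^ N * Xt * G) * (tildeObs At Ct N * Xt)
      = (tildeObs At Ct N * Xt) * F := by
  set K := tildeObs At Ct N * Xt with hK
  have hKF : ∀ (k : ℕ) (hk : k < N) (r : Fin m) (j : Fin s),
      (K * F) (⟨k, hk⟩, r) j = ((Ct * At ^ (k+1)) * Xt) r j := by
    intro k hk r j
    have h1 : (K * F) (⟨k, hk⟩, r) j = ((Ct * At ^ k) * (Xt * F)) r j := by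
      rw [hK, Matrix.mul_assoc]
      exact K_apply At Ct (Xt * F) (⟨k, hk⟩, r) j
    rw [h1, hF, ← Matrix.mul_assoc, Matrix.mul_assoc Ct (At ^ k) At, ← pow_succ]
  ext ⟨⟨k, hk⟩, r⟩ j
  by_cases hlast : k + 1 = N
  · have h2 : (blockCompanion (Ct * At ^ N * Xt * G) * K) (⟨k, hk⟩, r) j
        = ((Ct * At ^ N * Xt * G) * K) r j := by
      rw [Matrix.mul_apply, Matrix.mul_apply]
      apply Finset.sum_congr rfl
      intro ic _
      congr 1
      simp [blockCompanion, hlast]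
    rw [h2, hMuK, hKF k hk r j, hlast]
  · have h2 : (blockCompanion (Ct * At ^ N * Xt * G) * K) (⟨k, hk⟩, r) j
        = K (⟨k+1, by omega⟩, r) j := by
      rw [Matrix.mul_apply, Fintype.sum_prod_type]
      have hstep : ∀ i : Fin N,
          (∑ c : Fin m, blockCompanion (Ct * At ^ N * Xt * G) (⟨k, hk⟩, r) (i, c) * K (i, c) j)
            = if (i : ℕ) = k + 1 then K (i, r) j else 0 := by
        intro i
        by_cases hi : (i : ℕ) = k + 1
        · rw [if_pos hi, Finset.sum_eq_single r]
          · simp [blockCompanion, hlast, hi]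
          · intro c _ hc
            simp [blockCompanion, hlast, Ne.symm hc]
          · simp
        · rw [if_neg hi]
          apply Finset.sum_eq_zero
          intro c _
          simp [blockCompanion, hlast, hi]
      rw [Finset.sum_congr rfl (fun i _ => hstep i)]
      rw [Fintype.sum_eq_single (⟨k+1, by omega⟩ : Fin N)]
      · simp
      · intro i hi
        have : (i : ℕ) ≠ k + 1 := fun h => hi (by ext; simp [h])
        simp [this]
    rw [h2, hKF k hk r j, hK]
    exact K_apply At Ct Xt (⟨k + 1, by omega⟩, r) j
end

section Cx
variable {a b c : Type*} [Fintype a] [Fintype b] [Fintype c]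

/-- map to ℂ commutes with mul -/
lemma mapC_mul (M : Matrix a b ℝ) (N : Matrix b c ℝ) :
    (M * N).map Complex.ofReal = M.map Complex.ofReal * N.map Complex.ofReal := by
  ext i j
  simp [Matrix.mul_apply, Matrix.map_apply]

lemma mapC_mulVec_re_im (M : Matrix a b ℝ) (v : b → ℂ) (i : a) :
    (M.map Complex.ofReal).mulVec v i
      = (M.mulVec (fun j => (v j).re) i : ℝ) + (M.mulVec (fun j => (v j).im) i : ℝ) * Complex.I := by
  simp only [Matrix.mulVec, dotProduct, Matrix.map_apply]
  rw [Complex.ext_iff]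
  constructor
  · simp [Complex.re_sum, Complex.re_ofReal_mul]
  · simp [Complex.im_sum, Complex.im_ofReal_mul]

lemma mapC_mulVec_eq_zero_iff (M : Matrix a b ℝ) (v : b → ℂ) :
    (M.map Complex.ofReal).mulVec v = 0
      ↔ M.mulVec (fun j => (v j).re) = 0 ∧ M.mulVec (fun j => (v j).im) = 0 := by
  constructor
  · intro h
    constructor
    · funext i
      have hi := congrFun h i
      rw [mapC_mulVec_re_im] at hi
      simp only [Pi.zero_apply] at hi ⊢
      have := congrArg Complex.re hi
      simpa using this
    · funext i
      have hi := congrFun h i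
      rw [mapC_mulVec_re_im] at hi
      simp only [Pi.zero_apply] at hi ⊢
      have := congrArg Complex.im hi
      simpa using this
  · rintro ⟨h1, h2⟩
    funext i
    rw [mapC_mulVec_re_im, congrFun h1 i, congrFun h2 i]
    simp

/-- real+imaginary recombination -/
lemma mapC_mulVec_comb (M : Matrix a b ℝ) (x y : b → ℝ) :
    (M.map Complex.ofReal).mulVec (fun j => (x j : ℂ) + (y j : ℂ) * Complex.I)
      = fun i => (M.mulVec x i : ℂ) + (M.mulVec y i : ℂ) * Complex.I := by
  funext i
  have hre : (fun j => ((x j : ℂ) + (y j : ℂ) * Complex.I).re) = x := by funext j; simp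
  have him : (fun j => ((x j : ℂ) + (y j : ℂ) * Complex.I).im) = y := by funext j; simp
  rw [mapC_mulVec_re_im, hre, him]

end Cx

section Spec
variable {ι : Type*} [Fintype ι] [DecidableEq ι]

lemma mem_spectrum_iff_eigen (M : Matrix ι ι ℂ) (z : ℂ) :
    z ∈ spectrum ℂ M ↔ ∃ v, v ≠ 0 ∧ M.mulVec v = z • v := by
  rw [spectrum.mem_iff, Algebra.algebraMap_eq_smul_one]
  rw [Matrix.isUnit_iff_isUnit_det, isUnit_iff_ne_zero, not_not]
  rw [← Matrix.exists_mulVec_eq_zero_iff]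
  constructor
  · rintro ⟨v, hv, h⟩
    refine ⟨v, hv, ?_⟩
    rw [Matrix.sub_mulVec, Matrix.smul_mulVec, Matrix.one_mulVec, sub_eq_zero] at h
    exact h.symm
  · rintro ⟨v, hv, h⟩
    refine ⟨v, hv, ?_⟩
    rw [Matrix.sub_mulVec, Matrix.smul_mulVec, Matrix.one_mulVec, sub_eq_zero, h]

lemma rank_lt_iff_exists_ker {κ : Type*} [Fintype κ] [DecidableEq κ] (M : Matrix ι κ ℂ) :
    M.rank < Fintype.card κ ↔ ∃ v, v ≠ 0 ∧ M.mulVec v = 0 := by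
  classical
  have hrn := LinearMap.finrank_range_add_finrank_ker M.mulVecLin
  have hdom : Module.finrank ℂ (κ → ℂ) = Fintype.card κ :=
    Module.finrank_fintype_fun_eq_card ℂ
  rw [hdom] at hrn
  have hrank : M.rank = Module.finrank ℂ (LinearMap.range M.mulVecLin) := rfl
  constructor
  · intro h
    have hker : Module.finrank ℂ (LinearMap.ker M.mulVecLin) ≠ 0 := by omega
    have hbot : LinearMap.ker M.mulVecLin ≠ ⊥ := by
      intro hb
      rw [hb] at hker
      simp at hker
    obtain ⟨v, hv, hv0⟩ := Submodule.exists_mem_ne_zero_of_ne_bot hbot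
    exact ⟨v, hv0, hv⟩
  · rintro ⟨v, hv, h⟩
    have hmem : v ∈ LinearMap.ker M.mulVecLin := by
      simp [LinearMap.mem_ker, Matrix.mulVecLin_apply, h]
    have hbot : LinearMap.ker M.mulVecLin ≠ ⊥ := by
      intro hb
      rw [hb] at hmem
      exact hv (by simpa using hmem)
    have hz : Module.finrank ℂ (LinearMap.ker M.mulVecLin) ≠ 0 := by
      intro h0
      exact hbot (Submodule.finrank_eq_zero.mp h0)
    omega

end Spec

section Hip
variable {ι : Type*} [Fintype ι]

noncomputable def nsq (v : ι → ℂ) : ℝ := ∑ i, Complex.normSq (v i)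

lemma nsq_nonneg (v : ι → ℂ) : 0 ≤ nsq v :=
  Finset.sum_nonneg fun i _ => Complex.normSq_nonneg _

lemma nsq_eq_zero_iff (v : ι → ℂ) : nsq v = 0 ↔ v = 0 := by
  unfold nsq
  rw [Finset.sum_eq_zero_iff_of_nonneg (fun i _ => Complex.normSq_nonneg _)]
  constructor
  · intro h; funext i
    have := h i (Finset.mem_univ i)
    simpa [Complex.normSq_eq_zero] using this
  · intro h i _
    simp [congrFun h i]

lemma nsq_smul (z : ℂ) (v : ι → ℂ) : nsq (z • v) = Complex.normSq z * nsq v := by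
  unfold nsq
  rw [Finset.mul_sum]
  exact Finset.sum_congr rfl fun i _ => by simp [Complex.normSq_mul]

noncomputable def hip (a b : ι → ℂ) : ℂ := ∑ i, (starRingEnd ℂ) (a i) * b i

lemma hip_mulVec_left (M : Matrix ι ι ℂ) (a b : ι → ℂ) :
    hip (M.mulVec a) b = hip a (Mᴴ.mulVec b) := by
  unfold hip
  simp only [Matrix.mulVec, dotProduct, Matrix.conjTranspose_apply, map_sum,
    Finset.sum_mul, Finset.mul_sum]
  rw [Finset.sum_comm]
  apply Finset.sum_congr rfl
  intro j _
  apply Finset.sum_congr rfl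
  intro i _
  simp only [_root_.map_mul, Complex.star_def]
  ring

/-- Pythagoras for a Hermitian idempotent -/
lemma nsq_proj (Q : Matrix ι ι ℂ) (hH : Qᴴ = Q) (hI : Q * Q = Q) (v : ι → ℂ) :
    nsq v = nsq (Q.mulVec v) + nsq (v - Q.mulVec v) := by
  have hcross : hip (Q.mulVec v) (v - Q.mulVec v) = 0 := by
    rw [hip_mulVec_left, hH]
    rw [Matrix.mulVec_sub, Matrix.mulVec_mulVec, hI, sub_self]
    unfold hip
    simp
  have hexp : ∀ i, Complex.normSq (v i)
      = Complex.normSq (Q.mulVec v i) + Complex.normSq ((v - Q.mulVec v) i)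
        + 2 * ((Q.mulVec v i) * (starRingEnd ℂ) ((v - Q.mulVec v) i)).re := by
    intro i
    have : v i = Q.mulVec v i + (v - Q.mulVec v) i := by simp
    rw [this, Complex.normSq_add]
  unfold nsq
  rw [Finset.sum_congr rfl fun i _ => hexp i]
  rw [Finset.sum_add_distrib, Finset.sum_add_distrib]
  have : (∑ i, 2 * ((Q.mulVec v i) * (starRingEnd ℂ) ((v - Q.mulVec v) i)).re) = 0 := by
    rw [← Finset.mul_sum, ← Complex.re_sum]
    have h2 : (∑ i, (Q.mulVec v i) * (starRingEnd ℂ) ((v - Q.mulVec v) i))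
        = (starRingEnd ℂ) (hip (Q.mulVec v) (v - Q.mulVec v)) := by
      unfold hip
      rw [map_sum]
      apply Finset.sum_congr rfl
      intro i _
      simp [mul_comm]
    rw [h2, hcross]
    simp
  rw [this, add_zero]

end Hip

section
variable {N m : ℕ}

lemma Rmap_mulVec (Mu : Matrix (Fin m) (Fin N × Fin m) ℝ) (W : Fin N × Fin m → ℂ)
    (k : Fin N) (r : Fin m) :
    ((blockCompanion Mu).map Complex.ofReal).mulVec W (k, r)
      = if h : (k : ℕ) + 1 < N then W (⟨(k : ℕ) + 1, h⟩, r)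
        else (Mu.map Complex.ofReal).mulVec W r := by
  by_cases hlast : (k : ℕ) + 1 = N
  · rw [dif_neg (by omega)]
    simp only [Matrix.mulVec, dotProduct, Matrix.map_apply]
    apply Finset.sum_congr rfl
    intro ic _
    congr 2
    simp [blockCompanion, hlast]
  · have hk1 : (k : ℕ) + 1 < N := by omega
    rw [dif_pos hk1]
    simp only [Matrix.mulVec, dotProduct, Matrix.map_apply]
    rw [Fintype.sum_eq_single ((⟨(k : ℕ) + 1, hk1⟩, r) : Fin N × Fin m)]
    · simp [blockCompanion, hlast]
    · intro ic hic
      have : ¬ ((ic.1 : ℕ) = (k : ℕ) + 1 ∧ r = ic.2) := by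
        intro ⟨h1, h2⟩
        apply hic
        ext
        · simp [h1]
        · simp [← h2]
      simp only [blockCompanion, hlast, if_false, this]
      simp
end

section blocks
variable {N m : ℕ} (W : Fin N × Fin m → ℂ)

noncomputable def blk (W : Fin N × Fin m → ℂ) : ℕ → ℝ :=
  fun t => if h : t < N then ∑ r : Fin m, Complex.normSq (W (⟨t, h⟩, r)) else 0

lemma nsq_eq_sum_blk : nsq W = ∑ t ∈ Finset.range N, blk W t := by
  unfold nsq
  rw [Fintype.sum_prod_type]
  rw [← Fin.sum_univ_eq_sum_range (fun t => blk W t) N]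
  apply Finset.sum_congr rfl
  intro k _
  simp only [blk, k.isLt, dif_pos]

lemma blk_nonneg (t : ℕ) : 0 ≤ blk W t := by
  unfold blk
  split
  · exact Finset.sum_nonneg fun r _ => Complex.normSq_nonneg _
  · exact le_refl 0
end blocks

section
variable {N m : ℕ}

lemma nsq_RW (hN0 : 0 < N) (Mu : Matrix (Fin m) (Fin N × Fin m) ℝ) (W : Fin N × Fin m → ℂ)
    (hMu : (Mu.map Complex.ofReal).mulVec W = 0) :
    nsq (((blockCompanion Mu).map Complex.ofReal).mulVec W) = nsq W - blk W 0 := by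
  obtain ⟨N', rfl⟩ : ∃ N', N = N' + 1 := ⟨N - 1, by omega⟩
  rw [nsq_eq_sum_blk, nsq_eq_sum_blk]
  have hblk : ∀ t, t < N' + 1 → blk (((blockCompanion Mu).map Complex.ofReal).mulVec W) t
      = blk W (t + 1) := by
    intro t ht
    unfold blk
    rw [dif_pos ht]
    by_cases ht1 : t + 1 < N' + 1
    · rw [dif_pos ht1]
      apply Finset.sum_congr rfl
      intro r _
      rw [Rmap_mulVec, dif_pos ht1]
    · rw [dif_neg ht1]
      apply Finset.sum_eq_zero
      intro r _
      rw [Rmap_mulVec, dif_neg ht1, congrFun hMu r]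
      simp
  rw [Finset.sum_congr rfl (fun t ht => hblk t (Finset.mem_range.mp ht))]
  rw [Finset.sum_range_succ' (fun t => blk W t) N']
  rw [Finset.sum_range_succ (fun t => blk W (t + 1)) N']
  have : blk W (N' + 1) = 0 := by unfold blk; rw [dif_neg (by omega)]
  rw [this]
  ring

lemma W_zero (hN0 : 0 < N) (z : ℂ) (W : Fin N × Fin m → ℂ)
    (h0 : ∀ r, W (⟨0, hN0⟩, r) = 0)
    (hstep : ∀ (k : ℕ) (h1 : k + 1 < N) (r : Fin m),
      W (⟨k + 1, h1⟩, r) = z * W (⟨k, by omega⟩, r)) :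
    W = 0 := by
  have hall : ∀ (k : ℕ) (h : k < N) (r : Fin m), W (⟨k, h⟩, r) = 0 := by
    intro k
    induction k with
    | zero => intro h r; exact h0 r
    | succ k ih =>
        intro h r
        rw [hstep k h r, ih (by omega) r, mul_zero]
  funext ir
  obtain ⟨⟨k, hk⟩, r⟩ := ir
  exact hall k hk r
end

section traj
variable {n m p L : ℕ} (A : Matrix (Fin n) (Fin n) ℝ) (B : Matrix (Fin n) (Fin m) ℝ)
  (C : Matrix (Fin p) (Fin n) ℝ) (D : Matrix (Fin p) (Fin m) ℝ)

lemma cx_state (z : ℂ) (x : Fin n → ℂ) (uu : Fin m → ℂ)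
    (hAx : (A.map Complex.ofReal).mulVec x + (B.map Complex.ofReal).mulVec uu = z • x)
    (t : ℕ) :
    stateSeq A B (fun i => (x i).re) (fun k j => (z ^ k * uu j).re) t
      = fun i => (z ^ t * x i).re := by
  induction t with
  | zero => funext i; simp [stateSeq]
  | succ t ih =>
      rw [stateSeq, ih]
      funext i
      have hre : ∀ (M : Matrix (Fin n) (Fin n) ℝ) (v : Fin n → ℂ) (i : Fin n),
          M.mulVec (fun j => (v j).re) i = ((M.map Complex.ofReal).mulVec v i).re := by
        intro M v i
        rw [mapC_mulVec_re_im]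
        simp
      have hreB : ∀ (M : Matrix (Fin n) (Fin m) ℝ) (v : Fin m → ℂ) (i : Fin n),
          M.mulVec (fun j => (v j).re) i = ((M.map Complex.ofReal).mulVec v i).re := by
        intro M v i
        rw [mapC_mulVec_re_im]
        simp
      have e1 : A.mulVec (fun i => (z ^ t * x i).re) i
          = ((A.map Complex.ofReal).mulVec (fun i => z ^ t * x i) i).re := hre A _ i
      have e2 : B.mulVec ((fun k j => (z ^ k * uu j).re) t) i
          = ((B.map Complex.ofReal).mulVec (fun j => z ^ t * uu j) i).re := hreB B _ i
      simp only [Pi.add_apply]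
      rw [e1, e2, ← Complex.add_re]
      have e3 : (A.map Complex.ofReal).mulVec (fun i => z ^ t * x i) i
            + (B.map Complex.ofReal).mulVec (fun j => z ^ t * uu j) i
          = z ^ (t + 1) * x i := by
        have hx : (fun i => z ^ t * x i) = (z ^ t) • x := rfl
        have hu : (fun j => z ^ t * uu j) = (z ^ t) • uu := rfl
        rw [hx, hu, Matrix.mulVec_smul, Matrix.mulVec_smul, ← Pi.add_apply, ← smul_add, hAx]
        simp [pow_succ]
        ring
      rw [e3]

lemma cx_out (z : ℂ) (x : Fin n → ℂ) (uu : Fin m → ℂ)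
    (hAx : (A.map Complex.ofReal).mulVec x + (B.map Complex.ofReal).mulVec uu = z • x)
    (hCx : (C.map Complex.ofReal).mulVec x + (D.map Complex.ofReal).mulVec uu = 0) :
    ∀ t, C.mulVec (stateSeq A B (fun i => (x i).re) (fun k j => (z ^ k * uu j).re) t)
      + D.mulVec ((fun k j => (z ^ k * uu j).re) t) = 0 := by
  intro t
  rw [cx_state A B z x uu hAx t]
  funext i
  simp only [Pi.add_apply, Pi.zero_apply]
  have e1 : (C.mulVec fun j => (z ^ t * x j).re) i
      = ((C.map Complex.ofReal *ᵥ fun j => z ^ t * x j) i).re := by rw [mapC_mulVec_re_im]; simp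
  have e2 : (D.mulVec fun j => (z ^ t * uu j).re) i
      = ((D.map Complex.ofReal *ᵥ fun j => z ^ t * uu j) i).re := by rw [mapC_mulVec_re_im]; simp
  rw [e1, e2, ← Complex.add_re]
  have : (C.map Complex.ofReal).mulVec (fun i => z ^ t * x i) i
        + (D.map Complex.ofReal).mulVec (fun j => z ^ t * uu j) i
      = 0 := by
    have hx : (fun i => z ^ t * x i) = (z ^ t) • x := rfl
    have hu : (fun j => z ^ t * uu j) = (z ^ t) • uu := rfl
    rw [hx, hu, Matrix.mulVec_smul, Matrix.mulVec_smul, ← Pi.add_apply, ← smul_add, hCx]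
    simp
  rw [this]
  simp

lemma cx_mem (z : ℂ) (x : Fin n → ℂ) (uu : Fin m → ℂ)
    (hAx : (A.map Complex.ofReal).mulVec x + (B.map Complex.ofReal).mulVec uu = z • x)
    (hCx : (C.map Complex.ofReal).mulVec x + (D.map Complex.ofReal).mulVec uu = 0) :
    (fun i => (x i).re) ∈ outputNulling A B C D :=
  ⟨fun k j => (z ^ k * uu j).re, cx_out A B C D z x uu hAx hCx⟩

end traj


lemma mapC_conjTranspose {a b : Type*} (M : Matrix a b ℝ) :
    (M.map Complex.ofReal)ᴴ = Mᵀ.map Complex.ofReal := by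
  ext i j
  simp [Matrix.conjTranspose_apply, Complex.conj_ofReal]

lemma mapC_add {a b : Type*} (M N : Matrix a b ℝ) :
    (M + N).map Complex.ofReal = M.map Complex.ofReal + N.map Complex.ofReal := by
  ext i j
  simp

lemma Atil_eq {n m p L : ℕ} (A : Matrix (Fin n) (Fin n) ℝ) (B : Matrix (Fin n) (Fin m) ℝ)
    (C : Matrix (Fin p) (Fin n) ℝ) (P : Matrix (Fin m) (Fin (L + 1) × Fin p) ℝ) :
    A - B * P * obsMat A C L = A + B * (-(P * obsMat A C L)) := by
  rw [Matrix.mul_neg, ← Matrix.mul_assoc, ← sub_eq_add_neg]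

/-- Main theorem: with `Ã := A - B P O_L`, `C̃ := -P O_L`, `(A,C)` observable, `N ≥ n`,
`X̃` a matrix whose column space is `V₀`, `G` a Moore–Penrose pseudoinverse of
`Õ_{N-1} X̃`, `M_u := C̃ Ã^N X̃ G`, and `R` the block companion matrix of `M_u`, all
eigenvalues of `R` lie strictly inside the unit circle iff all invariant zeros of
`(A,B,C,D)` do. -/
theorem R_schur_stable_iff_invariant_zeros_stable {n m p L N s : ℕ}
    (A : Matrix (Fin n) (Fin n) ℝ) (B : Matrix (Fin n) (Fin m) ℝ)
    (C : Matrix (Fin p) (Fin n) ℝ) (D : Matrix (Fin p) (Fin m) ℝ)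
    (P : Matrix (Fin m) (Fin (L + 1) × Fin p) ℝ)
    (hP : P * invMat A B C D L = idZero m L)
    (hobs : ∀ ξ : Fin n → ℝ, (∀ k < n, (C * A ^ k).mulVec ξ = 0) → ξ = 0)
    (hN : n ≤ N)
    (Xt : Matrix (Fin n) (Fin s) ℝ)
    (hXt : ∀ ξ : Fin n → ℝ, ξ ∈ outputNulling A B C D ↔ ∃ w : Fin s → ℝ, Xt.mulVec w = ξ)
    (G : Matrix (Fin s) (Fin N × Fin m) ℝ)
    (hG : IsMoorePenrose
      (tildeObs (A - B * P * obsMat A C L) (-(P * obsMat A C L)) N * Xt) G) :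
    (∀ z ∈ spectrum ℂ
        ((blockCompanion
          ((-(P * obsMat A C L)) * (A - B * P * obsMat A C L) ^ N * Xt * G)).map
            Complex.ofReal),
        ‖z‖ < 1) ↔
    (∀ z : ℂ, (rosenbrock A B C D z).rank < n + m → ‖z‖ < 1) := by
  classical
  obtain ⟨hG1, hG2, hG3, hG4⟩ := hG
  obtain ⟨F, hF⟩ := exists_F A B C D P Xt hP hXt
  have hker := K_ker A B C D P Xt hP hobs hN hXt
  have hXtGK := XtGK (A - B * P * obsMat A C L) (-(P * obsMat A C L)) Xt G hG1 hker
  have hMuK := MuK (A - B * P * obsMat A C L) (-(P * obsMat A C L)) Xt G hXtGK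
  have hRK := RK (A - B * P * obsMat A C L) (-(P * obsMat A C L)) Xt G F hF hMuK
  set K := tildeObs (A - B * P * obsMat A C L) (-(P * obsMat A C L)) N * Xt with hK
  set RC := ((blockCompanion
      ((-(P * obsMat A C L)) * (A - B * P * obsMat A C L) ^ N * Xt * G)).map
        Complex.ofReal) with hRC
  constructor
  · -- all eigenvalues of R stable → all invariant zeros stable
    intro hL z hzrank
    have hcard : Fintype.card (Fin n ⊕ Fin m) = n + m := by simp
    obtain ⟨w, hw0, hwk⟩ := (rank_lt_iff_exists_ker (rosenbrock A B C D z)).mp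
      (by rw [hcard]; exact hzrank)
    rw [rosenbrock, Matrix.fromBlocks_mulVec] at hwk
    have htop : (A.map Complex.ofReal - z • 1).mulVec (w ∘ Sum.inl)
        + (B.map Complex.ofReal).mulVec (w ∘ Sum.inr) = 0 := by
      funext i; exact congrFun hwk (Sum.inl i)
    have hbot : (C.map Complex.ofReal).mulVec (w ∘ Sum.inl)
        + (D.map Complex.ofReal).mulVec (w ∘ Sum.inr) = 0 := by
      funext i; exact congrFun hwk (Sum.inr i)
    have hAx : (A.map Complex.ofReal).mulVec (w ∘ Sum.inl)
        + (B.map Complex.ofReal).mulVec (w ∘ Sum.inr) = z • (w ∘ Sum.inl) := by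
      funext i
      have hi := congrFun htop i
      rw [Matrix.sub_mulVec, Matrix.smul_mulVec, Matrix.one_mulVec] at hi
      simp only [Pi.add_apply, Pi.sub_apply, Pi.zero_apply, Pi.smul_apply,
        smul_eq_mul] at hi ⊢
      linear_combination hi
    have hout := cx_out A B C D z (w ∘ Sum.inl) (w ∘ Sum.inr) hAx hbot
    have hu0re := u0_eq A B C D P hP _ _ hout
    have hAx' : (A.map Complex.ofReal).mulVec ((-Complex.I) • (w ∘ Sum.inl))
        + (B.map Complex.ofReal).mulVec ((-Complex.I) • (w ∘ Sum.inr))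
        = z • ((-Complex.I) • (w ∘ Sum.inl)) := by
      rw [Matrix.mulVec_smul, Matrix.mulVec_smul, ← smul_add, hAx, smul_comm]
    have hbot' : (C.map Complex.ofReal).mulVec ((-Complex.I) • (w ∘ Sum.inl))
        + (D.map Complex.ofReal).mulVec ((-Complex.I) • (w ∘ Sum.inr)) = 0 := by
      rw [Matrix.mulVec_smul, Matrix.mulVec_smul, ← smul_add, hbot, smul_zero]
    have hout' := cx_out A B C D z _ _ hAx' hbot'
    have hu0im := u0_eq A B C D P hP _ _ hout'
    have hre_rot : ∀ (a : Type) (v : a → ℂ) (i : a), (((-Complex.I) • v) i).re = (v i).im := by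
      intro a v i
      simp [Complex.mul_re]
    -- uu = C̃ x over ℂ
    have huC : ((-(P * obsMat A C L)).map Complex.ofReal).mulVec (w ∘ Sum.inl)
        = w ∘ Sum.inr := by
      funext j
      rw [mapC_mulVec_re_im]
      have e1 : (-(P * obsMat A C L)).mulVec (fun i => ((w ∘ Sum.inl) i).re) j
          = ((w ∘ Sum.inr) j).re := by
        have h := congrFun hu0re j
        simp only [pow_zero, one_mul] at h
        exact h.symm
      have e2 : (-(P * obsMat A C L)).mulVec (fun i => ((w ∘ Sum.inl) i).im) j
          = ((w ∘ Sum.inr) j).im := by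
        have h := congrFun hu0im j
        simp only [pow_zero, one_mul] at h
        have hL1 : (fun i => (((-Complex.I) • (w ∘ Sum.inl)) i).re)
            = fun i => ((w ∘ Sum.inl) i).im := by
          funext i; exact hre_rot _ _ i
        rw [hL1] at h
        have hL2 : (((-Complex.I) • (w ∘ Sum.inr)) j).re = ((w ∘ Sum.inr) j).im :=
          hre_rot _ _ j
        rw [hL2] at h
        exact h.symm
      rw [e1, e2, Complex.re_add_im]
    have hAtx : ((A - B * P * obsMat A C L).map Complex.ofReal).mulVec (w ∘ Sum.inl)
        = z • (w ∘ Sum.inl) := by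
      rw [Atil_eq A B C P, mapC_add, Matrix.add_mulVec, mapC_mul,
        ← Matrix.mulVec_mulVec, huC, hAx]
    have hxne : (w ∘ Sum.inl) ≠ 0 := by
      intro h0
      apply hw0
      have huu0 : w ∘ Sum.inr = 0 := by rw [← huC, h0, Matrix.mulVec_zero]
      funext iw
      cases iw with
      | inl i => exact congrFun h0 i
      | inr j => exact congrFun huu0 j
    have hrex : (fun i => ((w ∘ Sum.inl) i).re) ∈ outputNulling A B C D :=
      cx_mem A B C D z _ _ hAx hbot
    have himx : (fun i => ((w ∘ Sum.inl) i).im) ∈ outputNulling A B C D := by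
      have h := cx_mem A B C D z _ _ hAx' hbot'
      have hL1 : (fun i => (((-Complex.I) • (w ∘ Sum.inl)) i).re)
          = fun i => ((w ∘ Sum.inl) i).im := by
        funext i; exact hre_rot _ _ i
      rwa [hL1] at h
    obtain ⟨a, ha⟩ := (hXt _).1 hrex
    obtain ⟨b, hb⟩ := (hXt _).1 himx
    have hxv : (Xt.map Complex.ofReal).mulVec
        (fun j => (a j : ℂ) + (b j : ℂ) * Complex.I) = w ∘ Sum.inl := by
      rw [mapC_mulVec_comb, ha, hb]
      funext i
      exact Complex.re_add_im _
    set U := (((tildeObs (A - B * P * obsMat A C L) (-(P * obsMat A C L)) N)).map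
        Complex.ofReal).mulVec (w ∘ Sum.inl) with hU
    have hUK : U = (K.map Complex.ofReal).mulVec
        (fun j => (a j : ℂ) + (b j : ℂ) * Complex.I) := by
      rw [hU, hK, mapC_mul, ← Matrix.mulVec_mulVec, hxv]
    have hmid : (Xt.map Complex.ofReal).mulVec ((F.map Complex.ofReal).mulVec
        (fun j => (a j : ℂ) + (b j : ℂ) * Complex.I)) = z • (w ∘ Sum.inl) := by
      rw [Matrix.mulVec_mulVec, ← mapC_mul, hF, mapC_mul, ← Matrix.mulVec_mulVec, hxv, hAtx]
    have hstep1 : RC.mulVec U = (K.map Complex.ofReal).mulVec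
        ((F.map Complex.ofReal).mulVec (fun j => (a j : ℂ) + (b j : ℂ) * Complex.I)) := by
      rw [hUK, Matrix.mulVec_mulVec, hRC, ← mapC_mul, hRK, mapC_mul, ← Matrix.mulVec_mulVec]
    have hstep2 : (K.map Complex.ofReal).mulVec
        ((F.map Complex.ofReal).mulVec (fun j => (a j : ℂ) + (b j : ℂ) * Complex.I))
        = z • U := by
      rw [hK, mapC_mul, ← Matrix.mulVec_mulVec, hmid, Matrix.mulVec_smul, ← hU]
    have hUeig : RC.mulVec U = z • U := hstep1.trans hstep2
    have hUne : U ≠ 0 := by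
      intro h0
      have hzero : ∀ (k : ℕ) (hk : k < N),
          (((-(P * obsMat A C L)) * (A - B * P * obsMat A C L) ^ k).map
            Complex.ofReal).mulVec (w ∘ Sum.inl) = 0 := by
        intro k hk
        funext r
        exact congrFun h0 (⟨k, hk⟩, r)
      have hrex0 : (fun i => ((w ∘ Sum.inl) i).re) = 0 := by
        apply V0_obs_zero A B C D P hP hobs hN _ hrex
        intro k hk
        have h1 := ((mapC_mulVec_eq_zero_iff _ _).mp (hzero k hk)).1
        rw [← Matrix.mulVec_mulVec] at h1
        exact h1
      have himx0 : (fun i => ((w ∘ Sum.inl) i).im) = 0 := by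
        apply V0_obs_zero A B C D P hP hobs hN _ himx
        intro k hk
        have h1 := ((mapC_mulVec_eq_zero_iff _ _).mp (hzero k hk)).2
        rw [← Matrix.mulVec_mulVec] at h1
        exact h1
      apply hxne
      funext i
      have h1 := congrFun hrex0 i
      have h2 := congrFun himx0 i
      simp only [Pi.zero_apply] at h1 h2 ⊢
      exact Complex.ext h1 h2
    exact hL z ((mem_spectrum_iff_eigen RC z).mpr ⟨U, hUne, hUeig⟩)
  · -- all invariant zeros stable → all eigenvalues of R stable
    intro hR z hzspec
    by_contra habs
    push_neg at habs
    rcases Nat.eq_zero_or_pos N with hN0 | hN0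
    · subst hN0
      rw [spectrum.mem_iff] at hzspec
      apply hzspec
      have h1 : ∀ M : Matrix (Fin 0 × Fin m) (Fin 0 × Fin m) ℂ, IsUnit M := by
        intro M
        have : M = 1 := by
          ext i j
          exact i.1.elim0
        rw [this]
        exact isUnit_one
      exact h1 _
    obtain ⟨U, hUne, hUeig⟩ := (mem_spectrum_iff_eigen RC z).mp hzspec
    set Q := (K * G).map Complex.ofReal with hQ
    set vv := (G.map Complex.ofReal).mulVec U with hvv
    set W := U - Q.mulVec U with hW
    have hQH : Qᴴ = Q := by rw [hQ, mapC_conjTranspose, hG3]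
    have hQI : Q * Q = Q := by
      rw [hQ, ← mapC_mul]
      congr 1
      rw [← Matrix.mul_assoc, hG1]
    have hGKG : G * (K * G) = G := by rw [← Matrix.mul_assoc]; exact hG2
    have hGW : (G.map Complex.ofReal).mulVec W = 0 := by
      rw [hW, Matrix.mulVec_sub, hQ, Matrix.mulVec_mulVec, ← mapC_mul, hGKG, sub_self]
    have hMuW : ((((-(P * obsMat A C L)) * (A - B * P * obsMat A C L) ^ N * Xt) * G).map
        Complex.ofReal).mulVec W = 0 := by
      rw [mapC_mul, ← Matrix.mulVec_mulVec, hGW, Matrix.mulVec_zero]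
    have hQKy : ∀ y : Fin s → ℂ,
        Q.mulVec ((K.map Complex.ofReal).mulVec y) = (K.map Complex.ofReal).mulVec y := by
      intro y
      rw [hQ, Matrix.mulVec_mulVec, ← mapC_mul, hG1]
    have hQU : Q.mulVec U = (K.map Complex.ofReal).mulVec vv := by
      rw [hQ, mapC_mul, ← Matrix.mulVec_mulVec, hvv]
    have hRQU : RC.mulVec (Q.mulVec U)
        = (K.map Complex.ofReal).mulVec ((F.map Complex.ofReal).mulVec vv) := by
      rw [hQU, Matrix.mulVec_mulVec, hRC, ← mapC_mul, hRK, mapC_mul, ← Matrix.mulVec_mulVec]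
    have hprojRW : RC.mulVec W - Q.mulVec (RC.mulVec W) = z • W := by
      have hRW : RC.mulVec W = z • U
          - (K.map Complex.ofReal).mulVec ((F.map Complex.ofReal).mulVec vv) := by
        rw [hW, Matrix.mulVec_sub, hUeig, hRQU]
      rw [hRW, Matrix.mulVec_sub, hQKy, Matrix.mulVec_smul, hW, hQU, smul_sub]
      abel
    have hPyth := nsq_proj Q hQH hQI (RC.mulVec W)
    have hnsqRW := nsq_RW hN0 _ W hMuW
    rw [← hRC] at hnsqRW
    have hz2 : 1 ≤ Complex.normSq z := by
      rw [Complex.normSq_eq_norm_sq]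
      nlinarith [habs]
    have hEq : nsq W - blk W 0 = nsq (Q.mulVec (RC.mulVec W)) + Complex.normSq z * nsq W := by
      rw [← hnsqRW, hPyth, hprojRW, nsq_smul]
    have hWle : nsq W ≤ Complex.normSq z * nsq W :=
      le_mul_of_one_le_left (nsq_nonneg W) hz2
    have hq0 : nsq (Q.mulVec (RC.mulVec W)) = 0 := by
      have h1 := blk_nonneg W 0
      have h2 := nsq_nonneg (Q.mulVec (RC.mulVec W))
      linarith
    have hb0 : blk W 0 = 0 := by
      have h1 := blk_nonneg W 0
      have h2 := nsq_nonneg (Q.mulVec (RC.mulVec W))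
      linarith
    have hQRW : Q.mulVec (RC.mulVec W) = 0 := (nsq_eq_zero_iff _).mp hq0
    have hRWz : RC.mulVec W = z • W := by
      have h := hprojRW
      rw [hQRW, sub_zero] at h
      exact h
    have hW0r : ∀ r, W (⟨0, hN0⟩, r) = 0 := by
      intro r
      have hb := hb0
      unfold blk at hb
      rw [dif_pos hN0] at hb
      have := (Finset.sum_eq_zero_iff_of_nonneg
        (fun r _ => Complex.normSq_nonneg _)).mp hb r (Finset.mem_univ r)
      exact Complex.normSq_eq_zero.mp this
    have hWstep : ∀ (k : ℕ) (h1 : k + 1 < N) (r : Fin m),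
        W (⟨k + 1, h1⟩, r) = z * W (⟨k, by omega⟩, r) := by
      intro k h1 r
      have hc := congrFun hRWz (⟨k, by omega⟩, r)
      rw [hRC, Rmap_mulVec] at hc
      rw [dif_pos h1] at hc
      simp only [Pi.smul_apply, smul_eq_mul] at hc
      exact hc
    have hWz : W = 0 := W_zero hN0 z W hW0r hWstep
    have hUQ : Q.mulVec U = U := by
      have h := hWz
      rw [hW, sub_eq_zero] at h
      exact h.symm
    have hUKvv : U = (K.map Complex.ofReal).mulVec vv := by rw [← hUQ, hQU]
    have hKF : (K.map Complex.ofReal).mulVec ((F.map Complex.ofReal).mulVec vv)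
        = z • (K.map Complex.ofReal).mulVec vv := by
      rw [Matrix.mulVec_mulVec, ← mapC_mul, ← hRK, mapC_mul, ← Matrix.mulVec_mulVec,
        ← hRC, ← hUKvv, hUeig, hUKvv]
    have hKe : (K.map Complex.ofReal).mulVec
        ((F.map Complex.ofReal).mulVec vv - z • vv) = 0 := by
      rw [Matrix.mulVec_sub, hKF, Matrix.mulVec_smul, sub_self]
    have hXe : (Xt.map Complex.ofReal).mulVec
        ((F.map Complex.ofReal).mulVec vv - z • vv) = 0 := by
      obtain ⟨h1, h2⟩ := (mapC_mulVec_eq_zero_iff _ _).mp hKe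
      exact (mapC_mulVec_eq_zero_iff _ _).mpr ⟨hker _ h1, hker _ h2⟩
    have hxeig : ((A - B * P * obsMat A C L).map Complex.ofReal).mulVec
        ((Xt.map Complex.ofReal).mulVec vv) = z • (Xt.map Complex.ofReal).mulVec vv := by
      rw [Matrix.mulVec_mulVec, ← mapC_mul, ← hF, mapC_mul, ← Matrix.mulVec_mulVec]
      have h := hXe
      rw [Matrix.mulVec_sub, sub_eq_zero, Matrix.mulVec_smul] at h
      exact h
    have hxne : (Xt.map Complex.ofReal).mulVec vv ≠ 0 := by
      intro h0
      apply hUne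
      rw [hUKvv, hK, mapC_mul, ← Matrix.mulVec_mulVec, h0, Matrix.mulVec_zero]
    have hre_x : (fun i => ((Xt.map Complex.ofReal).mulVec vv i).re)
        = Xt.mulVec (fun j => (vv j).re) := by
      funext i
      rw [mapC_mulVec_re_im]
      simp
    have him_x : (fun i => ((Xt.map Complex.ofReal).mulVec vv i).im)
        = Xt.mulVec (fun j => (vv j).im) := by
      funext i
      rw [mapC_mulVec_re_im]
      simp
    have hmem_re : (fun i => ((Xt.map Complex.ofReal).mulVec vv i).re)
        ∈ outputNulling A B C D := by
      rw [hre_x]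
      exact col_mem A B C D Xt hXt _
    have hmem_im : (fun i => ((Xt.map Complex.ofReal).mulVec vv i).im)
        ∈ outputNulling A B C D := by
      rw [him_x]
      exact col_mem A B C D Xt hXt _
    have hSreal : ∀ ξ : Fin n → ℝ, ξ ∈ outputNulling A B C D →
        (C + D * (-(P * obsMat A C L))).mulVec ξ = 0 := by
      intro ξ hξ
      have h := (mem_step A B C D P hP ξ hξ).1
      rw [Matrix.add_mulVec, ← Matrix.mulVec_mulVec]
      exact h
    have hSC : (((C + D * (-(P * obsMat A C L)))).map Complex.ofReal).mulVec
        ((Xt.map Complex.ofReal).mulVec vv) = 0 :=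
      (mapC_mulVec_eq_zero_iff _ _).mpr ⟨hSreal _ hmem_re, hSreal _ hmem_im⟩
    have hbotC : (C.map Complex.ofReal).mulVec ((Xt.map Complex.ofReal).mulVec vv)
        + (D.map Complex.ofReal).mulVec (((-(P * obsMat A C L)).map Complex.ofReal).mulVec
          ((Xt.map Complex.ofReal).mulVec vv)) = 0 := by
      rw [Matrix.mulVec_mulVec (M := D.map Complex.ofReal)
        (N := (-(P * obsMat A C L)).map Complex.ofReal), ← mapC_mul, ← Matrix.add_mulVec,
        ← mapC_add]
      exact hSC
    have hAtexp : ((A - B * P * obsMat A C L).map Complex.ofReal).mulVec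
          ((Xt.map Complex.ofReal).mulVec vv)
        = (A.map Complex.ofReal).mulVec ((Xt.map Complex.ofReal).mulVec vv)
          + (B.map Complex.ofReal).mulVec (((-(P * obsMat A C L)).map Complex.ofReal).mulVec
            ((Xt.map Complex.ofReal).mulVec vv)) := by
      rw [Atil_eq A B C P, mapC_add, Matrix.add_mulVec, mapC_mul, ← Matrix.mulVec_mulVec]
    have htopC : (A.map Complex.ofReal - z • 1).mulVec ((Xt.map Complex.ofReal).mulVec vv)
        + (B.map Complex.ofReal).mulVec (((-(P * obsMat A C L)).map Complex.ofReal).mulVec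
          ((Xt.map Complex.ofReal).mulVec vv)) = 0 := by
      have h2 : (A.map Complex.ofReal).mulVec ((Xt.map Complex.ofReal).mulVec vv)
          + (B.map Complex.ofReal).mulVec (((-(P * obsMat A C L)).map Complex.ofReal).mulVec
            ((Xt.map Complex.ofReal).mulVec vv))
          = z • (Xt.map Complex.ofReal).mulVec vv := by
        rw [← hAtexp]
        exact hxeig
      funext i
      have hi := congrFun h2 i
      rw [Matrix.sub_mulVec, Matrix.smul_mulVec, Matrix.one_mulVec]
      simp only [Pi.add_apply, Pi.sub_apply, Pi.zero_apply, Pi.smul_apply,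
        smul_eq_mul] at hi ⊢
      linear_combination hi
    have hwne : Sum.elim ((Xt.map Complex.ofReal).mulVec vv)
        (((-(P * obsMat A C L)).map Complex.ofReal).mulVec
          ((Xt.map Complex.ofReal).mulVec vv)) ≠ 0 := by
      intro h
      apply hxne
      funext i
      exact congrFun h (Sum.inl i)
    have hwker : (rosenbrock A B C D z).mulVec (Sum.elim ((Xt.map Complex.ofReal).mulVec vv)
        (((-(P * obsMat A C L)).map Complex.ofReal).mulVec
          ((Xt.map Complex.ofReal).mulVec vv))) = 0 := by
      rw [rosenbrock, Matrix.fromBlocks_mulVec]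
      funext ij
      cases ij with
      | inl i => exact congrFun htopC i
      | inr j => exact congrFun hbotC j
    have hrank : (rosenbrock A B C D z).rank < n + m := by
      have h := (rank_lt_iff_exists_ker (rosenbrock A B C D z)).mpr ⟨_, hwne, hwker⟩
      simpa using h
    have := hR z hrank
    linarith
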